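/- Let X⋆ ∈ ℝ^{I₁×I₂×I₃} have tubal rank R with skinny t-SVD X⋆ = U⋆*Σ⋆*V⋆ᵀ, let 0 < ε < 1 and 0 < τ ≤ 1, and suppose Q_k is an optimal alignment tensor between (L_k,R_k) and (L⋆,R⋆) with dist(L_k,R_k;L⋆,R⋆) ≤ (ε/√I₃)·τ^k·σ_min(X⋆). Then, writing L♮ := L_k*Q_k and R♮ := R_k*Q_k^{−ᵀ}: ‖L♮*(L♮ᵀ*L♮)⁻¹*Σ⋆^{1/2}‖₂ ∨ ‖R♮*(R♮ᵀ*R♮)⁻¹*Σ⋆^{1/2}‖₂ ≤ 1/(1 − ε). -/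

import Mathlib

open scoped BigOperators
open Matrix

/-- An order-3 real tensor. -/
abbrev Tensor (I₁ I₂ I₃ : ℕ) := Fin I₁ → Fin I₂ → Fin I₃ → ℝ

namespace RTPCA

variable {I₁ I₂ I₃ J R : ℕ}

/-- The t-product, computed by circular convolution along the third mode
(equivalently, slice-wise products in the Fourier domain). -/
noncomputable def tprod (A : Tensor I₁ I₂ I₃) (B : Tensor I₂ J I₃) : Tensor I₁ J I₃ :=
  fun i j k => ∑ l : Fin I₂, ∑ t : Fin I₃, A i l t * B l j (k - t)

/-- The tensor transpose: transpose each frontal slice and reverse the order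
of the frontal slices 2 through I₃. -/
def tT (A : Tensor I₁ I₂ I₃) : Tensor I₂ I₁ I₃ :=
  fun j i k => A i j (-k)

/-- The identity tensor: first frontal slice is the identity, the rest are zero. -/
def idT (R I₃ : ℕ) : Tensor R R I₃ :=
  fun i j k => if i = j ∧ (k : ℕ) = 0 then 1 else 0

/-- Discrete Fourier transform along the third mode. -/
noncomputable def dft (A : Tensor I₁ I₂ I₃) (i : Fin I₁) (j : Fin I₂) (k : Fin I₃) : ℂ :=
  ∑ t : Fin I₃, (A i j t : ℂ) *
    Complex.exp (-(2 * Real.pi * Complex.I * (k.val : ℂ) * (t.val : ℂ)) / (I₃ : ℂ))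

/-- Fourier-domain frontal slice. -/
noncomputable def fSlice (A : Tensor I₁ I₂ I₃) (k : Fin I₃) : Matrix (Fin I₁) (Fin I₂) ℂ :=
  Matrix.of fun i j => dft A i j k

/-- Inverse DFT along the third mode (real part). -/
noncomputable def invDft (F : Fin I₁ → Fin I₂ → Fin I₃ → ℂ) : Tensor I₁ I₂ I₃ :=
  fun i j t =>
    ((∑ k : Fin I₃, F i j k *
      Complex.exp ((2 * Real.pi * Complex.I * (k.val : ℂ) * (t.val : ℂ)) / (I₃ : ℂ))) / (I₃ : ℂ)).re

/-- Squared Frobenius norm. -/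
noncomputable def fro2 (A : Tensor I₁ I₂ I₃) : ℝ := ∑ i, ∑ j, ∑ k, (A i j k) ^ 2

/-- Frobenius norm. -/
noncomputable def froNorm (A : Tensor I₁ I₂ I₃) : ℝ := Real.sqrt (fro2 A)

/-- Entrywise sup norm ‖A‖_∞. -/
noncomputable def infNorm (A : Tensor I₁ I₂ I₃) : ℝ := ⨆ i, ⨆ j, ⨆ k, |A i j k|

/-- ℓ_{2,∞} norm: largest ℓ₂ norm of a horizontal slice. -/
noncomputable def twoInfNorm (A : Tensor I₁ I₂ I₃) : ℝ :=
  ⨆ i, Real.sqrt (∑ j, ∑ k, (A i j k) ^ 2)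

/-- ℓ_{1,∞} norm: largest ℓ₁ norm of a horizontal slice. -/
noncomputable def oneInfNorm (A : Tensor I₁ I₂ I₃) : ℝ := ⨆ i, ∑ j, ∑ k, |A i j k|

/-- Spectral norm (largest singular value) of a complex matrix. -/
noncomputable def matSpecNorm {m n : ℕ} (M : Matrix (Fin m) (Fin n) ℂ) : ℝ :=
  ‖LinearMap.toContinuousLinearMap (Matrix.toEuclideanLin M)‖

/-- Tensor spectral norm = tensor operator norm: the largest singular value of
the Fourier-domain frontal slices. -/
noncomputable def specNorm (A : Tensor I₁ I₂ I₃) : ℝ :=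
  ⨆ k : Fin I₃, matSpecNorm (fSlice A k)

/-- f-diagonal in the Fourier domain with strictly positive diagonal entries. -/
def FDiagPos (S : Tensor R R I₃) : Prop :=
  (∀ k, ∀ i j : Fin R, i ≠ j → fSlice S k i j = 0) ∧
  (∀ k, ∀ i : Fin R, 0 < (fSlice S k i i).re ∧ (fSlice S k i i).im = 0)

/-- f-diagonal in the Fourier domain with nonnegative diagonal entries. -/
def FDiagNonneg (S : Tensor R R I₃) : Prop :=
  (∀ k, ∀ i j : Fin R, i ≠ j → fSlice S k i j = 0) ∧
  (∀ k, ∀ i : Fin R, 0 ≤ (fSlice S k i i).re ∧ (fSlice S k i i).im = 0)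

/-- Skinny t-SVD with tubal rank R (strictly positive Fourier-domain diagonal). -/
structure IsSkinnyTSVD (X : Tensor I₁ I₂ I₃) (U : Tensor I₁ R I₃)
    (S : Tensor R R I₃) (V : Tensor I₂ R I₃) : Prop where
  decomp : X = tprod (tprod U S) (tT V)
  orthU : tprod (tT U) U = idT R I₃
  orthV : tprod (tT V) V = idT R I₃
  diag : FDiagPos S

/-- Skinny t-SVD with tubal rank at most R (nonnegative diagonal allowed). -/
structure IsSkinnyTSVDLe (X : Tensor I₁ I₂ I₃) (U : Tensor I₁ R I₃)
    (S : Tensor R R I₃) (V : Tensor I₂ R I₃) : Prop where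
  decomp : X = tprod (tprod U S) (tT V)
  orthU : tprod (tT U) U = idT R I₃
  orthV : tprod (tT V) V = idT R I₃
  diag : FDiagNonneg S

/-- σ_min: the smallest Fourier-domain diagonal entry of Σ. -/
noncomputable def sigmaMin (S : Tensor R R I₃) : ℝ :=
  ⨅ k : Fin I₃, ⨅ i : Fin R, (fSlice S k i i).re

/-- σ_max (= σ₁): the largest Fourier-domain diagonal entry of Σ. -/
noncomputable def sigmaMax (S : Tensor R R I₃) : ℝ :=
  ⨆ k : Fin I₃, ⨆ i : Fin R, (fSlice S k i i).re

/-- Condition number κ = σ_max / σ_min. -/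
noncomputable def condNum (S : Tensor R R I₃) : ℝ := sigmaMax S / sigmaMin S

/-- Σ^{1/2}: entrywise square roots in the Fourier domain. -/
noncomputable def sqrtT (S : Tensor R R I₃) : Tensor R R I₃ :=
  invDft fun i j k => (Real.sqrt ((dft S i j k).re) : ℂ)

/-- Σ^{-1/2}: entrywise reciprocal square roots in the Fourier domain. -/
noncomputable def invSqrtT (S : Tensor R R I₃) : Tensor R R I₃ :=
  invDft fun i j k => (((Real.sqrt ((dft S i j k).re))⁻¹ : ℝ) : ℂ)

/-- `Qi` is a two-sided t-product inverse of `Q` (i.e. `Q ∈ GL(R)`). -/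
def TInv (Q Qi : Tensor R R I₃) : Prop :=
  tprod Q Qi = idT R I₃ ∧ tprod Qi Q = idT R I₃

/-- Alignment error (the quantity inside the infimum defining `distT`)
for a given invertible Q with inverse Qi. -/
noncomputable def alignErr (L Ls : Tensor I₁ R I₃) (Rt Rs : Tensor I₂ R I₃)
    (Sh : Tensor R R I₃) (Q Qi : Tensor R R I₃) : ℝ :=
  Real.sqrt ((froNorm (tprod (tprod L Q - Ls) Sh)) ^ 2 +
    (froNorm (tprod (tprod Rt (tT Qi) - Rs) Sh)) ^ 2)

/-- The distance metric dist(L,R;L⋆,R⋆): the infimum of alignment errors over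
invertible tensors Q, where `Sh` is Σ⋆^{1/2}. -/
noncomputable def distT (L Ls : Tensor I₁ R I₃) (Rt Rs : Tensor I₂ R I₃)
    (Sh : Tensor R R I₃) : ℝ :=
  sInf {d : ℝ | ∃ Q Qi : Tensor R R I₃, TInv Q Qi ∧ d = alignErr L Ls Rt Rs Sh Q Qi}

/-- Q (with inverse Qi) is an optimal alignment tensor: it attains the infimum
defining the distance metric. -/
def IsOptAlign (L Ls : Tensor I₁ R I₃) (Rt Rs : Tensor I₂ R I₃)
    (Sh : Tensor R R I₃) (Q Qi : Tensor R R I₃) : Prop :=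
  TInv Q Qi ∧ alignErr L Ls Rt Rs Sh Q Qi = distT L Ls Rt Rs Sh

/-- Entrywise soft-thresholding. -/
noncomputable def softThresh (ζ : ℝ) (A : Tensor I₁ I₂ I₃) : Tensor I₁ I₂ I₃ :=
  fun i j k => Real.sign (A i j k) * max 0 (|A i j k| - ζ)

/-- Support: the set of index triples at which the tensor is nonzero. -/
def supp (A : Tensor I₁ I₂ I₃) : Set (Fin I₁ × Fin I₂ × Fin I₃) :=
  {p | A p.1 p.2.1 p.2.2 ≠ 0}

/-- α-sparsity: every horizontal, lateral and frontal slice has at most an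
α fraction of nonzero entries. -/
def IsSparse (α : ℝ) (S : Tensor I₁ I₂ I₃) : Prop :=
  (∀ i₁ : Fin I₁, ({p : Fin I₂ × Fin I₃ | S i₁ p.1 p.2 ≠ 0}.ncard : ℝ) ≤ α * I₂ * I₃) ∧
  (∀ i₂ : Fin I₂, ({p : Fin I₁ × Fin I₃ | S p.1 i₂ p.2 ≠ 0}.ncard : ℝ) ≤ α * I₁ * I₃) ∧
  (∀ i₃ : Fin I₃, ({p : Fin I₁ × Fin I₂ | S p.1 p.2 i₃ ≠ 0}.ncard : ℝ) ≤ α * I₁ * I₂)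

/-- Tensor μ-incoherence conditions for the skinny t-SVD factors U, V. -/
def Incoherent (μ : ℝ) (U : Tensor I₁ R I₃) (V : Tensor I₂ R I₃) : Prop :=
  twoInfNorm U ≤ Real.sqrt (μ * R / I₁) ∧ twoInfNorm V ≤ Real.sqrt (μ * R / I₂)

/-- Top-R truncated t-SVD of A: a skinny t-SVD-shaped factorization which, in
every Fourier-domain frontal slice, keeps R largest singular values together
with their singular vectors (the residual is orthogonal to the kept singular
vectors and its spectral norm is at most every kept singular value). -/
structure IsTruncTSVD (A : Tensor I₁ I₂ I₃) (U : Tensor I₁ R I₃)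
    (S : Tensor R R I₃) (V : Tensor I₂ R I₃) : Prop where
  orthU : tprod (tT U) U = idT R I₃
  orthV : tprod (tT V) V = idT R I₃
  diag : FDiagNonneg S
  leftOrth : ∀ k, (fSlice U k)ᴴ * (fSlice A k - fSlice (tprod (tprod U S) (tT V)) k) = 0
  rightOrth : ∀ k, (fSlice A k - fSlice (tprod (tprod U S) (tT V)) k) * fSlice V k = 0
  topR : ∀ k, ∀ r : Fin R,
    matSpecNorm (fSlice A k - fSlice (tprod (tprod U S) (tT V)) k) ≤ (fSlice S k r r).re

end RTPCA

open RTPCA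



noncomputable def eC (n : ℕ) (m : ℤ) : ℂ := Complex.exp (-(2 * Real.pi * Complex.I * m) / n)

lemma eC_add (n : ℕ) (a b : ℤ) : eC n (a + b) = eC n a * eC n b := by
  rw [eC, eC, eC, ← Complex.exp_add]; congr 1; push_cast; ring

lemma eC_zero (n : ℕ) : eC n 0 = 1 := by simp [eC]

lemma eC_int_mul (n : ℕ) (q : ℤ) : eC n ((n : ℤ) * q) = 1 := by
  rcases eq_or_ne n 0 with h | h
  · simp [h, eC]
  · have hn : (n : ℂ) ≠ 0 := Nat.cast_ne_zero.mpr h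
    rw [eC]
    have : -(2 * (Real.pi : ℂ) * Complex.I * ((n : ℤ) * q : ℤ)) / n
        = ((-q : ℤ) : ℂ) * (2 * Real.pi * Complex.I) := by
      push_cast; field_simp
    rw [this, Complex.exp_int_mul_two_pi_mul_I]

lemma eC_congr {n : ℕ} {a b : ℤ} (h : a ≡ b [ZMOD n]) : eC n a = eC n b := by
  obtain ⟨q, hq⟩ := h.dvd
  have : a = b + (n : ℤ) * (-q) := by linarith [hq]
  rw [this, eC_add, eC_int_mul, mul_one]

lemma eC_pow (n : ℕ) (m : ℤ) (t : ℕ) : eC n (m * t) = (eC n m) ^ t := by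
  rw [eC, eC, ← Complex.exp_nat_mul]; congr 1; push_cast; ring

lemma eC_conj (n : ℕ) (m : ℤ) : (starRingEnd ℂ) (eC n m) = eC n (-m) := by
  rw [eC, eC, ← Complex.exp_conj]; congr 1
  simp [map_div₀, Complex.conj_I, map_ofNat]

lemma eC_norm (n : ℕ) (m : ℤ) : ‖eC n m‖ = 1 := by
  have : eC n m = Complex.exp ((((-2) * Real.pi * m / n : ℝ)) * Complex.I) := by
    rw [eC]; congr 1; push_cast; ring
  rw [this, Complex.norm_exp_ofReal_mul_I]

lemma eC_ne_one {n : ℕ} [NeZero n] {m : ℤ} (h : ¬ (n : ℤ) ∣ m) : eC n m ≠ 1 := by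
  intro h1
  obtain ⟨t, ht⟩ := Complex.exp_eq_one_iff.mp h1
  have hn : (n : ℂ) ≠ 0 := Nat.cast_ne_zero.mpr (NeZero.ne n)
  have hpi : (2 * (Real.pi : ℂ) * Complex.I) ≠ 0 := by
    simp [Real.pi_ne_zero, Complex.I_ne_zero]
  have hm : (m : ℂ) = ((-t * n : ℤ) : ℂ) := by
    field_simp at ht
    push_cast
    have h2 : (2 * (Real.pi : ℂ) * Complex.I) * (-(m : ℂ)) = (2 * (Real.pi : ℂ) * Complex.I) * (t * n) := by
      linear_combination (2 * (Real.pi : ℂ) * Complex.I) * ht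
    have := mul_left_cancel₀ hpi h2
    linear_combination -this
  have : m = -t * n := by exact_mod_cast hm
  exact h ⟨-t, by linarith⟩

lemma sum_eC (n : ℕ) [NeZero n] (m : ℤ) :
    ∑ t : Fin n, eC n (m * t.val) = if (n : ℤ) ∣ m then (n : ℂ) else 0 := by
  split_ifs with h
  · obtain ⟨q, hq⟩ := h
    have : ∀ t : Fin n, eC n (m * t.val) = 1 := fun t => by
      rw [hq, mul_assoc, eC_int_mul]
    simp [this]
  · have hne := eC_ne_one (n := n) h
    have : ∀ t : Fin n, eC n (m * t.val) = (eC n m) ^ t.val := fun t => eC_pow n m t.val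
    rw [Finset.sum_congr rfl (fun t _ => this t)]
    rw [Fin.sum_univ_eq_sum_range (fun i => (eC n m) ^ i), geom_sum_eq hne]
    have : (eC n m) ^ n = 1 := by
      rw [← eC_pow, mul_comm, eC_int_mul]
    rw [this, sub_self, zero_div]
section DFT
open RTPCA Finset
variable {I₁ I₂ I₃ J R : ℕ}

lemma intMod_cast (a n : ℤ) : a % n ≡ a [ZMOD n] := by
  unfold Int.ModEq
  simp [Int.emod_emod_of_dvd]

lemma eC_fin_mul {n : ℕ} [NeZero n] (k : ℤ) (s u : Fin n) :
    eC n (k * ((s + u).val : ℤ)) = eC n (k * s.val) * eC n (k * u.val) := by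
  rw [← eC_add, ← mul_add]
  apply eC_congr
  apply Int.ModEq.mul_left
  have : (((s + u).val : ℤ)) = ((s.val + u.val : ℤ)) % n := by
    rw [Fin.val_add]
    push_cast
    rfl
  rw [this]
  exact intMod_cast _ _

lemma dft_eq (A : Tensor I₁ I₂ I₃) (i : Fin I₁) (j : Fin I₂) (k : Fin I₃) :
    dft A i j k = ∑ t : Fin I₃, (A i j t : ℂ) * eC I₃ ((k.val : ℤ) * t.val) := by
  unfold dft eC
  refine Finset.sum_congr rfl fun t _ => ?_
  congr 2
  push_cast
  ring

lemma fSlice_apply (A : Tensor I₁ I₂ I₃) (k : Fin I₃) (i : Fin I₁) (j : Fin I₂) :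
    fSlice A k i j = dft A i j k := rfl

lemma fSlice_sub (A B : Tensor I₁ I₂ I₃) (k : Fin I₃) :
    fSlice (A - B) k = fSlice A k - fSlice B k := by
  ext i j
  simp only [fSlice, Matrix.of_apply, Matrix.sub_apply, dft, Pi.sub_apply]
  rw [← Finset.sum_sub_distrib]
  refine Finset.sum_congr rfl fun t _ => ?_
  push_cast
  ring

lemma fSlice_tprod [NeZero I₃] (A : Tensor I₁ I₂ I₃) (B : Tensor I₂ J I₃) (k : Fin I₃) :
    fSlice (tprod A B) k = fSlice A k * fSlice B k := by
  ext i j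
  simp only [fSlice, Matrix.of_apply, Matrix.mul_apply, dft_eq]
  have expand : ∀ t, tprod A B i j t = ∑ l : Fin I₂, ∑ s : Fin I₃, A i l s * B l j (t - s) :=
    fun t => rfl
  calc ∑ t : Fin I₃, (tprod A B i j t : ℂ) * eC I₃ ((k.val : ℤ) * t.val)
      = ∑ t : Fin I₃, ∑ l : Fin I₂, ∑ s : Fin I₃,
          (A i l s : ℂ) * (B l j (t - s) : ℂ) * eC I₃ ((k.val : ℤ) * t.val) := by
        refine Finset.sum_congr rfl fun t _ => ?_
        rw [expand t]
        push_cast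
        rw [Finset.sum_mul]
        refine Finset.sum_congr rfl fun l _ => ?_
        rw [Finset.sum_mul]
    _ = ∑ l : Fin I₂, ∑ s : Fin I₃, ∑ t : Fin I₃,
          (A i l s : ℂ) * (B l j (t - s) : ℂ) * eC I₃ ((k.val : ℤ) * t.val) := by
        rw [Finset.sum_comm]
        refine Finset.sum_congr rfl fun l _ => ?_
        rw [Finset.sum_comm]
    _ = ∑ l : Fin I₂, ∑ s : Fin I₃, ∑ u : Fin I₃,
          ((A i l s : ℂ) * eC I₃ ((k.val : ℤ) * s.val)) *
          ((B l j u : ℂ) * eC I₃ ((k.val : ℤ) * u.val)) := by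
        refine Finset.sum_congr rfl fun l _ => ?_
        refine Finset.sum_congr rfl fun s _ => ?_
        refine (Fintype.sum_equiv (Equiv.addLeft s)
          (fun u => ((A i l s : ℂ) * eC I₃ ((k.val : ℤ) * s.val)) *
            ((B l j u : ℂ) * eC I₃ ((k.val : ℤ) * u.val)))
          (fun t => (A i l s : ℂ) * (B l j (t - s) : ℂ) * eC I₃ ((k.val : ℤ) * t.val))
          (fun u => ?_)).symm
        show _ = (A i l s : ℂ) * (B l j (s + u - s) : ℂ) * eC I₃ ((k.val : ℤ) * ((s + u).val))
        rw [add_sub_cancel_left, eC_fin_mul]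
        ring
    _ = ∑ l : Fin I₂,
          (∑ s : Fin I₃, (A i l s : ℂ) * eC I₃ ((k.val : ℤ) * s.val)) *
          (∑ u : Fin I₃, (B l j u : ℂ) * eC I₃ ((k.val : ℤ) * u.val)) := by
        refine Finset.sum_congr rfl fun l _ => ?_
        rw [Finset.sum_mul_sum]

lemma eC_fin_neg {n : ℕ} [NeZero n] (k : ℤ) (t : Fin n) :
    eC n (k * ((-t : Fin n).val : ℤ)) = eC n (-(k * t.val)) := by
  apply eC_congr
  rw [show -(k * (t.val : ℤ)) = k * (-(t.val : ℤ)) by ring]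
  apply Int.ModEq.mul_left
  have : (((-t : Fin n).val : ℤ)) = ((n : ℤ) - t.val) % n := by
    rw [Fin.coe_neg]
    push_cast [Nat.cast_sub t.isLt.le]
    ring_nf
  rw [this]
  calc ((n : ℤ) - t.val) % n ≡ (n : ℤ) - t.val [ZMOD n] := intMod_cast _ _
    _ ≡ 0 - t.val [ZMOD n] := by
        apply Int.ModEq.sub_right
        unfold Int.ModEq
        simp
    _ = -(t.val : ℤ) := by ring

lemma fSlice_tT [NeZero I₃] (A : Tensor I₁ I₂ I₃) (k : Fin I₃) :
    fSlice (tT A) k = (fSlice A k)ᴴ := by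
  ext p q
  simp only [fSlice, Matrix.of_apply, Matrix.conjTranspose_apply, dft_eq, tT]
  rw [show (star : ℂ → ℂ) = (starRingEnd ℂ) from rfl, map_sum]
  refine (Fintype.sum_equiv (Equiv.neg (Fin I₃))
    (fun t => (A q p (-(-t)) : ℂ) * eC I₃ ((k.val : ℤ) * ((-t : Fin I₃).val)))
    (fun t => (A q p (-t) : ℂ) * eC I₃ ((k.val : ℤ) * t.val))
    (fun t => rfl)).symm.trans ?_
  refine Finset.sum_congr rfl fun t _ => ?_
  rw [neg_neg, eC_fin_neg, _root_.map_mul, eC_conj, Complex.conj_ofReal]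

lemma fSlice_idT [NeZero I₃] (k : Fin I₃) : fSlice (idT R I₃) k = 1 := by
  ext i j
  simp only [fSlice, Matrix.of_apply, dft_eq, idT, Matrix.one_apply]
  rw [Finset.sum_eq_single (0 : Fin I₃)]
  · by_cases h : i = j <;> simp [h, eC_zero]
  · intro t _ ht
    have : ¬ ((t : ℕ) = 0) := by
      intro h0; exact ht (Fin.ext (by simp [h0]))
    simp [this]
  · simp

end DFT
section INV
open RTPCA Finset
variable {I₁ I₂ I₃ R : ℕ}

lemma neg_val_modEq {n : ℕ} [NeZero n] (k : Fin n) :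
    (((-k : Fin n).val : ℤ)) ≡ -(k.val : ℤ) [ZMOD n] := by
  have h1 : (((-k : Fin n).val : ℤ)) = ((n : ℤ) - k.val) % n := by
    rw [Fin.coe_neg]
    push_cast [Nat.cast_sub k.isLt.le]
    ring_nf
  rw [h1]
  calc ((n : ℤ) - k.val) % n ≡ (n : ℤ) - k.val [ZMOD n] := intMod_cast _ _
    _ ≡ 0 - k.val [ZMOD n] := by
        apply Int.ModEq.sub_right
        unfold Int.ModEq
        simp
    _ = -(k.val : ℤ) := by ring

lemma eC_neg_val {n : ℕ} [NeZero n] (k : Fin n) (c : ℤ) :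
    eC n (((-k : Fin n).val : ℤ) * c) = eC n (-((k.val : ℤ) * c)) := by
  apply eC_congr
  rw [show -((k.val : ℤ) * c) = (-(k.val : ℤ)) * c by ring]
  exact (neg_val_modEq k).mul_right c

lemma dft_neg_k (A : Tensor I₁ I₂ I₃) [NeZero I₃] (i : Fin I₁) (j : Fin I₂) (k : Fin I₃) :
    dft A i j (-k) = (starRingEnd ℂ) (dft A i j k) := by
  rw [dft_eq, dft_eq, map_sum]
  refine Finset.sum_congr rfl fun t _ => ?_
  rw [_root_.map_mul, eC_conj, Complex.conj_ofReal, eC_neg_val]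

lemma invDft_exp {n : ℕ} (k t : Fin n) :
    Complex.exp ((2 * Real.pi * Complex.I * (k.val : ℂ) * (t.val : ℂ)) / n)
      = eC n (-((k.val : ℤ) * t.val)) := by
  unfold eC
  congr 1
  push_cast
  ring

lemma dft_invDft [NeZero I₃] (F : Fin I₁ → Fin I₂ → Fin I₃ → ℂ)
    (hF : ∀ i j k, F i j (-k) = (starRingEnd ℂ) (F i j k))
    (i : Fin I₁) (j : Fin I₂) (k : Fin I₃) :
    dft (invDft F) i j k = F i j k := by
  have hn : (I₃ : ℂ) ≠ 0 := Nat.cast_ne_zero.mpr (NeZero.ne I₃)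
  set S : Fin I₃ → ℂ := fun t => ∑ k' : Fin I₃, F i j k' * eC I₃ (-((k'.val : ℤ) * t.val))
    with hS
  have hconjF : ∀ k', (starRingEnd ℂ) (F i j k') = F i j (-k') := fun k' =>
    (hF i j k').symm
  have hreal : ∀ t, (starRingEnd ℂ) (S t) = S t := by
    intro t
    have step1 : (starRingEnd ℂ) (S t)
        = ∑ k' : Fin I₃, F i j (-k') * eC I₃ ((k'.val : ℤ) * t.val) := by
      rw [hS, map_sum]
      refine Finset.sum_congr rfl fun k' _ => ?_
      rw [_root_.map_mul, eC_conj, neg_neg, hconjF]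
    rw [step1, hS]
    refine Fintype.sum_equiv (Equiv.neg (Fin I₃))
      (fun x => F i j (-x) * eC I₃ ((x.val : ℤ) * t.val))
      (fun x => F i j x * eC I₃ (-((x.val : ℤ) * t.val)))
      (fun x => ?_)
    show F i j (-x) * eC I₃ ((x.val : ℤ) * t.val)
      = F i j (-x) * eC I₃ (-(((-x : Fin I₃).val : ℤ) * t.val))
    congr 1
    apply eC_congr
    have h2 := ((neg_val_modEq x).mul_right (t.val : ℤ)).neg
    refine Int.ModEq.symm (h2.trans ?_)
    rw [show -(-(x.val : ℤ) * t.val) = (x.val : ℤ) * t.val by ring]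
  have hcast : ∀ t, ((invDft F i j t : ℝ) : ℂ) = S t / I₃ := by
    intro t
    have h1 : invDft F i j t = (S t / I₃).re := by
      unfold invDft
      congr 2
      refine Finset.sum_congr rfl fun k' _ => ?_
      rw [invDft_exp]
    rw [h1]
    apply Complex.conj_eq_iff_re.mp
    rw [map_div₀, hreal]
    simp
  rw [dft_eq]
  calc ∑ t : Fin I₃, ((invDft F i j t : ℝ) : ℂ) * eC I₃ ((k.val : ℤ) * t.val)
      = ∑ t : Fin I₃, ∑ k' : Fin I₃,
          (F i j k' / I₃) * eC I₃ (((k.val : ℤ) - k'.val) * t.val) := by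
        refine Finset.sum_congr rfl fun t _ => ?_
        rw [hcast, hS]
        rw [div_mul_eq_mul_div, Finset.sum_mul, Finset.sum_div]
        refine Finset.sum_congr rfl fun k' _ => ?_
        rw [mul_assoc, ← eC_add]
        rw [show (-((k'.val : ℤ) * t.val) + (k.val : ℤ) * t.val)
          = ((k.val : ℤ) - k'.val) * t.val by ring]
        ring
    _ = ∑ k' : Fin I₃, (F i j k' / I₃) *
          (if (I₃ : ℤ) ∣ ((k.val : ℤ) - k'.val) then (I₃ : ℂ) else 0) := by
        rw [Finset.sum_comm]
        refine Finset.sum_congr rfl fun k' _ => ?_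
        rw [← Finset.mul_sum, sum_eC]
    _ = F i j k := by
        rw [Finset.sum_eq_single k]
        · simp [hn]
        · intro k' _ hk'
          have : ¬ (I₃ : ℤ) ∣ ((k.val : ℤ) - k'.val) := by
            intro hd
            have h0 : ((k.val : ℤ) - k'.val) = 0 := by
              apply Int.eq_zero_of_abs_lt_dvd hd
              have := k.isLt
              have := k'.isLt
              rw [abs_lt]
              omega
            apply hk'
            have : k'.val = k.val := by omega
            exact Fin.ext this
          simp [this]
        · simp

lemma fSlice_sqrtT [NeZero I₃] (Sig : Tensor R R I₃) (k : Fin I₃) :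
    fSlice (sqrtT Sig) k
      = Matrix.of fun i j => ((Real.sqrt ((fSlice Sig k i j).re) : ℝ) : ℂ) := by
  ext i j
  show dft (invDft _) i j k = _
  rw [dft_invDft _ (fun i j k => ?_) i j k]
  · rfl
  · rw [dft_neg_k, Complex.conj_re, Complex.conj_ofReal]

end INV
section NORM
open RTPCA Matrix

noncomputable def enormC {m : ℕ} (v : Fin m → ℂ) : ℝ := Real.sqrt (∑ i, ‖v i‖ ^ 2)

lemma enormC_eq {m : ℕ} (v : Fin m → ℂ) :
    enormC v = ‖((WithLp.equiv 2 (Fin m → ℂ)).symm v : EuclideanSpace ℂ (Fin m))‖ := by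
  rw [EuclideanSpace.norm_eq, enormC]; rfl

lemma enormC_nonneg {m : ℕ} (v : Fin m → ℂ) : 0 ≤ enormC v := Real.sqrt_nonneg _

lemma enormC_sq {m : ℕ} (v : Fin m → ℂ) : enormC v ^ 2 = ∑ i, ‖v i‖ ^ 2 := by
  rw [enormC, Real.sq_sqrt]
  positivity

lemma enormC_sub_le {m : ℕ} (u v : Fin m → ℂ) : enormC u - enormC v ≤ enormC (u - v) := by
  rw [enormC_eq, enormC_eq, enormC_eq]
  have h : ((WithLp.equiv 2 (Fin m → ℂ)).symm (u - v) : EuclideanSpace ℂ (Fin m))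
      = (WithLp.equiv 2 (Fin m → ℂ)).symm u - (WithLp.equiv 2 (Fin m → ℂ)).symm v := rfl
  rw [h]
  exact norm_sub_norm_le _ _

lemma matSpecNorm_le_of {m n : ℕ} (M : Matrix (Fin m) (Fin n) ℂ) {c : ℝ} (hc : 0 ≤ c)
    (h : ∀ v : Fin n → ℂ, enormC (M *ᵥ v) ≤ c * enormC v) : matSpecNorm M ≤ c := by
  apply ContinuousLinearMap.opNorm_le_bound _ hc
  intro x
  rw [LinearMap.coe_toContinuousLinearMap', Matrix.toEuclideanLin_apply,
    show ‖WithLp.toLp 2 (M *ᵥ x.ofLp)‖ = enormC (M *ᵥ x.ofLp) from (enormC_eq _).symm]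
  calc enormC (M *ᵥ (WithLp.equiv 2 (Fin n → ℂ)) x)
      ≤ c * enormC ((WithLp.equiv 2 (Fin n → ℂ)) x) := h _
    _ = c * ‖x‖ := by rw [enormC_eq]; rfl

lemma dot_le {m : ℕ} (u v : Fin m → ℂ) : ‖star u ⬝ᵥ v‖ ≤ enormC u * enormC v := by
  have := norm_inner_le_norm (𝕜 := ℂ)
    ((WithLp.equiv 2 (Fin m → ℂ)).symm u : EuclideanSpace ℂ (Fin m))
    ((WithLp.equiv 2 (Fin m → ℂ)).symm v)
  rw [EuclideanSpace.inner_eq_star_dotProduct, dotProduct_comm] at this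
  simpa [enormC_eq] using this

lemma conj_mul_re (z : ℂ) : ((starRingEnd ℂ) z * z).re = ‖z‖ ^ 2 := by
  rw [Complex.sq_norm, Complex.normSq_apply, Complex.mul_re]
  simp [Complex.conj_re, Complex.conj_im]

lemma dot_self_re {m : ℕ} (u : Fin m → ℂ) : (star u ⬝ᵥ u).re = enormC u ^ 2 := by
  rw [enormC_sq, dotProduct, Complex.re_sum]
  refine Finset.sum_congr rfl fun i _ => ?_
  rw [Pi.star_apply]
  exact conj_mul_re (u i)

lemma enormC_mulVec_sq {m R : ℕ} (A : Matrix (Fin m) (Fin R) ℂ) (w : Fin R → ℂ) :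
    enormC (A *ᵥ w) ^ 2 = (star w ⬝ᵥ ((Aᴴ * A) *ᵥ w)).re := by
  rw [← dot_self_re, Matrix.star_mulVec, Matrix.dotProduct_mulVec, Matrix.vecMul_vecMul,
    ← Matrix.dotProduct_mulVec]

lemma mulVec_le_frob {m R : ℕ} (M : Matrix (Fin m) (Fin R) ℂ) (v : Fin R → ℂ) :
    enormC (M *ᵥ v) ≤ Real.sqrt (∑ i, ∑ j, ‖M i j‖ ^ 2) * enormC v := by
  rw [enormC, enormC, ← Real.sqrt_mul (by positivity)]
  apply Real.sqrt_le_sqrt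
  rw [Finset.sum_mul]
  apply Finset.sum_le_sum
  intro i _
  calc ‖(M *ᵥ v) i‖ ^ 2 = ‖∑ j, M i j * v j‖ ^ 2 := rfl
    _ ≤ (∑ j, ‖M i j‖ * ‖v j‖) ^ 2 := by
        apply pow_le_pow_left₀ (norm_nonneg _)
        exact (norm_sum_le _ _).trans (le_of_eq (Finset.sum_congr rfl fun j _ => norm_mul _ _))
    _ ≤ (∑ j, ‖M i j‖ ^ 2) * ∑ j, ‖v j‖ ^ 2 :=
        Finset.sum_mul_sq_le_sq_mul_sq _ _ _

lemma core_bound {m R : ℕ} (A U : Matrix (Fin m) (Fin R) ℂ)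
    (G : Matrix (Fin R) (Fin R) ℂ) (d : Fin R → ℝ) (s ε : ℝ)
    (hU : Uᴴ * U = 1)
    (hd : ∀ i, 0 < d i) (hds : ∀ i, s ≤ d i ^ 2) (hs : 0 < s)
    (hε : 0 < ε) (hε1 : ε < 1)
    (hG1 : (Aᴴ * A) * G = 1)
    (hF : Real.sqrt (∑ i, ∑ j,
        ‖((A - U * diagonal (fun i => (d i : ℂ))) * diagonal (fun i => (d i : ℂ))) i j‖ ^ 2)
      ≤ ε * s) :
    matSpecNorm (A * G * diagonal (fun i => (d i : ℂ))) ≤ 1 / (1 - ε) := by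
  have h1ε : 0 < 1 - ε := by linarith
  set D : Matrix (Fin R) (Fin R) ℂ := diagonal (fun i => (d i : ℂ)) with hD
  set Di : Matrix (Fin R) (Fin R) ℂ := diagonal (fun i => ((d i)⁻¹ : ℂ)) with hDi
  set E : Matrix (Fin m) (Fin R) ℂ := A - U * D with hE
  have hDDi : D * Di = 1 := by
    rw [hD, hDi, Matrix.diagonal_mul_diagonal]
    have hfun : (fun i => (d i : ℂ) * ((d i : ℂ))⁻¹) = fun _ => (1 : ℂ) := by
      funext i
      rw [mul_inv_cancel₀ (Complex.ofReal_ne_zero.mpr (hd i).ne')]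
    rw [hfun, Matrix.diagonal_one]
  apply matSpecNorm_le_of _ (by positivity)
  intro x
  set w : Fin R → ℂ := G *ᵥ (D *ᵥ x) with hw
  have hAGDx : (A * G * D) *ᵥ x = A *ᵥ w := by
    rw [hw, ← Matrix.mulVec_mulVec, ← Matrix.mulVec_mulVec]
  rw [hAGDx]
  have hkey : (Aᴴ * A) *ᵥ w = D *ᵥ x := by
    rw [hw, Matrix.mulVec_mulVec (D *ᵥ x) (Aᴴ * A) G, hG1, Matrix.one_mulVec]
  have h1 : enormC (A *ᵥ w) ^ 2 = (star w ⬝ᵥ (D *ᵥ x)).re := by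
    rw [enormC_mulVec_sq, hkey]
  have h2 : star w ⬝ᵥ (D *ᵥ x) = star (D *ᵥ w) ⬝ᵥ x := by
    simp only [dotProduct, Pi.star_apply, hD, Matrix.mulVec_diagonal]
    refine Finset.sum_congr rfl fun i _ => ?_
    rw [star_mul', Complex.star_def, Complex.conj_ofReal]
    ring
  have h3 : enormC (A *ᵥ w) ^ 2 ≤ enormC (D *ᵥ w) * enormC x := by
    rw [h1, h2]
    have hre : (star (D *ᵥ w) ⬝ᵥ x).re ≤ ‖star (D *ᵥ w) ⬝ᵥ x‖ := by
      exact Complex.re_le_norm _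
    exact hre.trans (dot_le _ _)
  have hEw : enormC (E *ᵥ w) ≤ (ε * s) * enormC (Di *ᵥ w) := by
    have hEDDi : (E * D) *ᵥ (Di *ᵥ w) = E *ᵥ w := by
      rw [Matrix.mulVec_mulVec w (E * D) Di, Matrix.mul_assoc, hDDi, Matrix.mul_one]
    rw [← hEDDi]
    exact (mulVec_le_frob _ _).trans
      (mul_le_mul_of_nonneg_right hF (enormC_nonneg _))
  have hDiD : enormC (Di *ᵥ w) ≤ enormC (D *ᵥ w) / s := by
    have hsq : enormC (Di *ᵥ w) ^ 2 ≤ (enormC (D *ᵥ w) / s) ^ 2 := by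
      rw [div_pow, enormC_sq, enormC_sq, Finset.sum_div]
      apply Finset.sum_le_sum
      intro i _
      have hnormDi : ‖(Di *ᵥ w) i‖ = (d i)⁻¹ * ‖w i‖ := by
        simp only [hDi, Matrix.mulVec_diagonal, norm_mul, norm_inv, Complex.norm_real,
          Real.norm_eq_abs, abs_of_pos (hd i)]
      have hnormD : ‖(D *ᵥ w) i‖ = d i * ‖w i‖ := by
        simp only [hD, Matrix.mulVec_diagonal, norm_mul, Complex.norm_real,
          Real.norm_eq_abs, abs_of_pos (hd i)]
      rw [hnormDi, hnormD]
      have hdi := hd i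
      have hdsi := hds i
      have key : (d i)⁻¹ ^ 2 * s ^ 2 ≤ d i ^ 2 := by
        have h2 : s ^ 2 ≤ (d i ^ 2) * (d i ^ 2) := by nlinarith
        calc (d i)⁻¹ ^ 2 * s ^ 2 ≤ (d i)⁻¹ ^ 2 * ((d i ^ 2) * (d i ^ 2)) :=
              mul_le_mul_of_nonneg_left h2 (by positivity)
          _ = d i ^ 2 := by field_simp
      rw [mul_pow, mul_pow, le_div_iff₀ (by positivity : (0:ℝ) < s ^ 2)]
      calc (d i)⁻¹ ^ 2 * ‖w i‖ ^ 2 * s ^ 2 = ((d i)⁻¹ ^ 2 * s ^ 2) * ‖w i‖ ^ 2 := by ring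
        _ ≤ d i ^ 2 * ‖w i‖ ^ 2 := mul_le_mul_of_nonneg_right key (sq_nonneg _)
    have := Real.sqrt_le_sqrt (hsq.trans_eq rfl)
    rwa [Real.sqrt_sq (enormC_nonneg _), Real.sqrt_sq (div_nonneg (enormC_nonneg _) hs.le)] at this
  have hUD : enormC ((U * D) *ᵥ w) = enormC (D *ᵥ w) := by
    have hsq1 := enormC_mulVec_sq (U * D) w
    have hsq2 := enormC_mulVec_sq D w
    have hUDUD : (U * D)ᴴ * (U * D) = Dᴴ * D := by
      rw [Matrix.conjTranspose_mul, Matrix.mul_assoc, ← Matrix.mul_assoc Uᴴ U D, hU,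
        Matrix.one_mul]
    rw [hUDUD] at hsq1
    have heq : enormC ((U * D) *ᵥ w) ^ 2 = enormC (D *ᵥ w) ^ 2 := by rw [hsq1, hsq2]
    have := congrArg Real.sqrt heq
    rwa [Real.sqrt_sq (enormC_nonneg _), Real.sqrt_sq (enormC_nonneg _)] at this
  have henorm_neg : enormC (-(E *ᵥ w)) = enormC (E *ᵥ w) := by
    rw [enormC, enormC]
    congr 1
    refine Finset.sum_congr rfl fun i _ => ?_
    rw [Pi.neg_apply, norm_neg]
  have h4 : (1 - ε) * enormC (D *ᵥ w) ≤ enormC (A *ᵥ w) := by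
    have hA : (U * D) *ᵥ w - -(E *ᵥ w) = A *ᵥ w := by
      rw [hE, Matrix.sub_mulVec]
      abel
    have htri := enormC_sub_le ((U * D) *ᵥ w) (-(E *ᵥ w))
    rw [hA, henorm_neg, hUD] at htri
    have hEwb : enormC (E *ᵥ w) ≤ ε * enormC (D *ᵥ w) := by
      calc enormC (E *ᵥ w) ≤ (ε * s) * enormC (Di *ᵥ w) := hEw
        _ ≤ (ε * s) * (enormC (D *ᵥ w) / s) :=
            mul_le_mul_of_nonneg_left hDiD (by positivity)
        _ = ε * enormC (D *ᵥ w) := by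
            field_simp
    linarith
  rcases eq_or_lt_of_le (enormC_nonneg (A *ᵥ w)) with h0 | h0
  · rw [← h0]
    exact mul_nonneg (div_nonneg zero_le_one h1ε.le) (enormC_nonneg x)
  · have h5 : enormC (D *ᵥ w) ≤ enormC (A *ᵥ w) / (1 - ε) := by
      rw [le_div_iff₀ h1ε]
      linarith
    have h6 : enormC (A *ᵥ w) ^ 2 ≤ (enormC (A *ᵥ w) / (1 - ε)) * enormC x :=
      h3.trans (mul_le_mul_of_nonneg_right h5 (enormC_nonneg x))
    have h7 : enormC (A *ᵥ w) ≤ enormC x / (1 - ε) := by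
      rw [pow_two] at h6
      have h6' : enormC (A *ᵥ w) * enormC (A *ᵥ w)
          ≤ enormC (A *ᵥ w) * (enormC x / (1 - ε)) := by
        calc enormC (A *ᵥ w) * enormC (A *ᵥ w)
            ≤ (enormC (A *ᵥ w) / (1 - ε)) * enormC x := h6
          _ = enormC (A *ᵥ w) * (enormC x / (1 - ε)) := by ring
      exact le_of_mul_le_mul_left h6' h0
    calc enormC (A *ᵥ w) ≤ enormC x / (1 - ε) := h7
      _ = 1 / (1 - ε) * enormC x := by ring

end NORM
section GLUE
open RTPCA Matrix

lemma sigmaMin_pos {R I₃ : ℕ} [NeZero I₃] [NeZero R] {Sig : Tensor R R I₃}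
    (h : FDiagPos Sig) : 0 < sigmaMin Sig := by
  unfold sigmaMin
  obtain ⟨k0, hk0⟩ := exists_eq_ciInf_of_finite
    (f := fun k : Fin I₃ => ⨅ i : Fin R, (fSlice Sig k i i).re)
  rw [← hk0]
  obtain ⟨i0, hi0⟩ := exists_eq_ciInf_of_finite
    (f := fun i : Fin R => (fSlice Sig k0 i i).re)
  rw [← hi0]
  exact (h.2 k0 i0).1

lemma sigmaMin_le {R I₃ : ℕ} (Sig : Tensor R R I₃) (k : Fin I₃) (i : Fin R) :
    sigmaMin Sig ≤ (fSlice Sig k i i).re := by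
  unfold sigmaMin
  refine (ciInf_le ?_ k).trans (ciInf_le ?_ i)
  · exact (Set.finite_range _).bddBelow
  · exact (Set.finite_range _).bddBelow

lemma slice_frob_le {I₁ I₂ I₃ : ℕ} [NeZero I₃] (T : Tensor I₁ I₂ I₃) (k : Fin I₃) :
    Real.sqrt (∑ i, ∑ j, ‖fSlice T k i j‖ ^ 2) ≤ Real.sqrt I₃ * froNorm T := by
  rw [froNorm, ← Real.sqrt_mul (Nat.cast_nonneg I₃)]
  apply Real.sqrt_le_sqrt
  rw [fro2, Finset.mul_sum]
  apply Finset.sum_le_sum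
  intro i _
  rw [Finset.mul_sum]
  apply Finset.sum_le_sum
  intro j _
  calc ‖fSlice T k i j‖ ^ 2
      ≤ (∑ t, ‖(T i j t : ℂ) * eC I₃ ((k.val : ℤ) * t.val)‖) ^ 2 := by
        rw [fSlice_apply, dft_eq]
        exact pow_le_pow_left₀ (norm_nonneg _) (norm_sum_le _ _) 2
    _ = (∑ t, 1 * |T i j t|) ^ 2 := by
        congr 1
        refine Finset.sum_congr rfl fun t _ => ?_
        rw [norm_mul, eC_norm, mul_one, one_mul, Complex.norm_real, Real.norm_eq_abs]
    _ ≤ (∑ _t : Fin I₃, (1:ℝ) ^ 2) * ∑ t, |T i j t| ^ 2 :=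
        Finset.sum_mul_sq_le_sq_mul_sq _ _ _
    _ = (I₃ : ℝ) * ∑ t, T i j t ^ 2 := by
        simp [sq_abs, Finset.card_univ]

lemma froNorm_nonneg {I₁ I₂ I₃ : ℕ} (T : Tensor I₁ I₂ I₃) : 0 ≤ froNorm T :=
  Real.sqrt_nonneg _

lemma alignErr_left_le {I₁ I₂ I₃ R : ℕ} (L Ls : Tensor I₁ R I₃) (Rt Rs : Tensor I₂ R I₃)
    (Sh Q Qi : Tensor R R I₃) :
    froNorm (tprod (tprod L Q - Ls) Sh) ≤ alignErr L Ls Rt Rs Sh Q Qi := by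
  rw [alignErr]
  have h := Real.sqrt_le_sqrt (le_add_of_nonneg_right
    (sq_nonneg (froNorm (tprod (tprod Rt (tT Qi) - Rs) Sh))) :
    froNorm (tprod (tprod L Q - Ls) Sh) ^ 2 ≤ _)
  rwa [Real.sqrt_sq (froNorm_nonneg _)] at h

lemma alignErr_right_le {I₁ I₂ I₃ R : ℕ} (L Ls : Tensor I₁ R I₃) (Rt Rs : Tensor I₂ R I₃)
    (Sh Q Qi : Tensor R R I₃) :
    froNorm (tprod (tprod Rt (tT Qi) - Rs) Sh) ≤ alignErr L Ls Rt Rs Sh Q Qi := by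
  rw [alignErr]
  have h := Real.sqrt_le_sqrt (le_add_of_nonneg_left
    (sq_nonneg (froNorm (tprod (tprod L Q - Ls) Sh))) :
    froNorm (tprod (tprod Rt (tT Qi) - Rs) Sh) ^ 2 ≤ _)
  rwa [Real.sqrt_sq (froNorm_nonneg _)] at h

lemma matSpecNorm_zero_cols {m : ℕ} (M : Matrix (Fin m) (Fin 0) ℂ) : matSpecNorm M ≤ 0 := by
  apply ContinuousLinearMap.opNorm_le_bound _ le_rfl
  intro x
  have hx : x = 0 := Subsingleton.elim x 0
  rw [hx]
  simp

lemma side_bound {m R I₃ : ℕ} [NeZero I₃] [NeZero R]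
    (Sig : Tensor R R I₃) (hdiag : FDiagPos Sig)
    (Us : Tensor m R I₃) (horth : tprod (tT Us) Us = idT R I₃)
    (L : Tensor m R I₃) (G : Tensor R R I₃)
    (hG : tprod (tprod (tT L) L) G = idT R I₃)
    (ε : ℝ) (hε : 0 < ε) (hε1 : ε < 1)
    (hfro : froNorm (tprod (L - tprod Us (sqrtT Sig)) (sqrtT Sig))
      ≤ ε / Real.sqrt I₃ * sigmaMin Sig) :
    specNorm (tprod (tprod L G) (sqrtT Sig)) ≤ 1 / (1 - ε) := by
  rw [specNorm]
  apply ciSup_le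
  intro k
  set d : Fin R → ℝ := fun i => Real.sqrt ((fSlice Sig k i i).re) with hd
  have hSh : fSlice (sqrtT Sig) k = Matrix.diagonal (fun i => (d i : ℂ)) := by
    rw [fSlice_sqrtT]
    ext i j
    by_cases hij : i = j
    · subst hij
      simp [Matrix.diagonal, hd]
    · simp only [Matrix.of_apply, Matrix.diagonal_apply_ne _ hij]
      rw [hdiag.1 k i j hij]
      simp
  have hslice : fSlice (tprod (tprod L G) (sqrtT Sig)) k
      = fSlice L k * fSlice G k * Matrix.diagonal (fun i => (d i : ℂ)) := by
    rw [fSlice_tprod, fSlice_tprod, hSh]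
  rw [hslice]
  apply core_bound (fSlice L k) (fSlice Us k) (fSlice G k) d (sigmaMin Sig) ε
  · have h := congrArg (fun T => fSlice T k) horth
    simpa [fSlice_tprod, fSlice_tT, fSlice_idT] using h
  · intro i
    exact Real.sqrt_pos.mpr (hdiag.2 k i).1
  · intro i
    rw [hd]
    show sigmaMin Sig ≤ Real.sqrt ((fSlice Sig k i i).re) ^ 2
    rw [Real.sq_sqrt (hdiag.2 k i).1.le]
    exact sigmaMin_le Sig k i
  · exact sigmaMin_pos hdiag
  · exact hε
  · exact hε1
  · have h := congrArg (fun T => fSlice T k) hG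
    simpa [fSlice_tprod, fSlice_tT, fSlice_idT] using h
  · have hEq : (fSlice L k - fSlice Us k * Matrix.diagonal fun i => (d i : ℂ))
        * Matrix.diagonal (fun i => (d i : ℂ))
        = fSlice (tprod (L - tprod Us (sqrtT Sig)) (sqrtT Sig)) k := by
      rw [fSlice_tprod, fSlice_sub, fSlice_tprod, hSh]
    rw [hEq]
    have hI3pos : (0:ℝ) < Real.sqrt I₃ :=
      Real.sqrt_pos.mpr (by exact_mod_cast Nat.pos_of_ne_zero (NeZero.ne I₃))
    calc Real.sqrt (∑ i, ∑ j, ‖fSlice (tprod (L - tprod Us (sqrtT Sig)) (sqrtT Sig)) k i j‖ ^ 2)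
        ≤ Real.sqrt I₃ * froNorm (tprod (L - tprod Us (sqrtT Sig)) (sqrtT Sig)) :=
          slice_frob_le _ _
      _ ≤ Real.sqrt I₃ * (ε / Real.sqrt I₃ * sigmaMin Sig) :=
          mul_le_mul_of_nonneg_left hfro (Real.sqrt_nonneg _)
      _ = ε * sigmaMin Sig := by
          field_simp

end GLUE
/-- spectral-norm bound for the scaled aligned factors. -/
theorem scaled_factor_specNorm_bound
    {I₁ I₂ I₃ R : ℕ}
    (Xs : Tensor I₁ I₂ I₃) (Us : Tensor I₁ R I₃) (Sig : Tensor R R I₃) (Vs : Tensor I₂ R I₃)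
    (hsvd : IsSkinnyTSVD Xs Us Sig Vs)
    (ε τ : ℝ) (hε₀ : 0 < ε) (hε₁ : ε < 1) (hτ₀ : 0 < τ) (hτ₁ : τ ≤ 1) (k : ℕ)
    (Lk : Tensor I₁ R I₃) (Rk : Tensor I₂ R I₃)
    (Q Qi : Tensor R R I₃)
    (hopt : IsOptAlign Lk (tprod Us (sqrtT Sig)) Rk (tprod Vs (sqrtT Sig)) (sqrtT Sig) Q Qi)
    (hdist : distT Lk (tprod Us (sqrtT Sig)) Rk (tprod Vs (sqrtT Sig)) (sqrtT Sig)
      ≤ ε / Real.sqrt I₃ * τ ^ k * sigmaMin Sig)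
    (Gl Gr : Tensor R R I₃)
    (hGl : TInv (tprod (tT (tprod Lk Q)) (tprod Lk Q)) Gl)
    (hGr : TInv (tprod (tT (tprod Rk (tT Qi))) (tprod Rk (tT Qi))) Gr) :
    max (specNorm (tprod (tprod (tprod Lk Q) Gl) (sqrtT Sig)))
        (specNorm (tprod (tprod (tprod Rk (tT Qi)) Gr) (sqrtT Sig)))
      ≤ 1 / (1 - ε) := by
  have h1ε : 0 < 1 - ε := by linarith
  have hinv : (0:ℝ) ≤ 1 / (1 - ε) := by positivity
  rcases Nat.eq_zero_or_pos I₃ with hI | hI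
  · subst hI
    simp only [specNorm]
    rw [Real.iSup_of_isEmpty, Real.iSup_of_isEmpty, max_self]
    exact hinv
  haveI : NeZero I₃ := ⟨hI.ne'⟩
  rcases Nat.eq_zero_or_pos R with hR | hR
  · subst hR
    have h0 : ∀ {a : ℕ} (T : Tensor a 0 I₃), specNorm T ≤ 1 / (1 - ε) := by
      intro a T
      apply ciSup_le
      intro j
      exact (matSpecNorm_zero_cols _).trans hinv
    exact max_le (h0 _) (h0 _)
  haveI : NeZero R := ⟨hR.ne'⟩
  obtain ⟨⟨hQ1, hQ2⟩, heq⟩ := hopt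
  rw [← heq] at hdist
  have hτk : τ ^ k ≤ 1 := pow_le_one₀ hτ₀.le hτ₁
  have hI3pos : (0:ℝ) < Real.sqrt I₃ :=
    Real.sqrt_pos.mpr (by exact_mod_cast hI)
  have hsp : 0 < sigmaMin Sig := sigmaMin_pos hsvd.diag
  have hbound : ε / Real.sqrt I₃ * τ ^ k * sigmaMin Sig
      ≤ ε / Real.sqrt I₃ * sigmaMin Sig := by
    have ha : 0 < ε / Real.sqrt I₃ := div_pos hε₀ hI3pos
    calc ε / Real.sqrt I₃ * τ ^ k * sigmaMin Sig
        ≤ ε / Real.sqrt I₃ * 1 * sigmaMin Sig :=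
          mul_le_mul_of_nonneg_right (mul_le_mul_of_nonneg_left hτk ha.le) hsp.le
      _ = ε / Real.sqrt I₃ * sigmaMin Sig := by ring
  apply max_le
  · apply side_bound Sig hsvd.diag Us hsvd.orthU (tprod Lk Q) Gl hGl.1 ε hε₀ hε₁
    exact ((alignErr_left_le Lk (tprod Us (sqrtT Sig)) Rk (tprod Vs (sqrtT Sig))
      (sqrtT Sig) Q Qi).trans hdist).trans hbound
  · apply side_bound Sig hsvd.diag Vs hsvd.orthV (tprod Rk (tT Qi)) Gr hGr.1 ε hε₀ hε₁
    exact ((alignErr_right_le Lk (tprod Us (sqrtT Sig)) Rk (tprod Vs (sqrtT Sig))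
      (sqrtT Sig) Q Qi).trans hdist).trans hbound
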